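/- For the transmission problem with coefficient ratio μ = a₊/a₋ and interior angle ω, the 4×4 determinant A(λ) = det[[-1,0,cos2πλ,sin2πλ],[0,-1,-μ sin2πλ, μ cos2πλ],[-cos λω, -sin λω, cos λω, sin λω],[sin λω, -cos λω, -μ sin λω, μ cos λω]] equals (μ²+1) sin(λω) sin(λ(2π-ω)) + 2μ(1 - cos(λω) cos(λ(2π-ω))). -/

import Mathlib

open Complex Matrix

/-- The 4×4 determinant governing injectivity of the Mellin symbol of the transmission
problem with contrast `μ = aPlus / aMinus` and interior angle `ω`. -/
theorem mellin_symbol_determinant (aPlus aMinus : ℝ) (ha : aMinus ≠ 0) (ω : ℝ) (lam : ℂ) :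
    Matrix.det
      !![-1, 0, Complex.cos (2 * Real.pi * lam), Complex.sin (2 * Real.pi * lam);
         0, -1, -((aPlus : ℂ) / aMinus) * Complex.sin (2 * Real.pi * lam),
           ((aPlus : ℂ) / aMinus) * Complex.cos (2 * Real.pi * lam);
         -Complex.cos (lam * ω), -Complex.sin (lam * ω),
           Complex.cos (lam * ω), Complex.sin (lam * ω);
         Complex.sin (lam * ω), -Complex.cos (lam * ω),
           -((aPlus : ℂ) / aMinus) * Complex.sin (lam * ω), ((aPlus : ℂ) / aMinus) * Complex.cos (lam * ω)]
    = (((aPlus : ℂ) / aMinus) ^ 2 + 1) * Complex.sin (lam * ω) * Complex.sin (lam * (2 * Real.pi - ω)) +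
        2 * ((aPlus : ℂ) / aMinus) *
          (1 - Complex.cos (lam * ω) * Complex.cos (lam * (2 * Real.pi - ω))) := by
  have h2 : (2 * Real.pi * lam : ℂ) = lam * ω + lam * (2 * Real.pi - ω) := by ring
  rw [h2, Complex.cos_add, Complex.sin_add]
  simp [Matrix.det_succ_row_zero, Fin.sum_univ_succ, Fin.succAbove, Fin.castSucc, Fin.castAdd, Fin.castLE]
  have hp := Complex.sin_sq_add_cos_sq (lam * ↑ω)
  have hq := Complex.sin_sq_add_cos_sq (lam * (2 * Real.pi - ω))
  set c := Complex.cos (lam * ↑ω)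
  set s := Complex.sin (lam * ↑ω)
  set C := Complex.cos (lam * (2 * Real.pi - ω))
  set S := Complex.sin (lam * (2 * Real.pi - ω))
  set m := ((aPlus : ℂ) / aMinus)
  linear_combination (m^2 + 1 + (m^2+1)*s*S - 2*m*c*C + m*(1+(C^2+S^2)*(s^2+c^2+1)) - m^2 - 1) * hp + m * hq
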